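/- Minimal selection theorem: Let M be a metric space, N a Hilbert space, and T : M → 2^N a continuous (both lower and upper semi-continuous) multivalued map with T(m) nonempty, closed and convex for each m ∈ M. Then the map m ↦ 𝔪(T(m)), where 𝔪(T(m)) is the unique element of minimal norm in T(m), is a continuous selection of T. -/

import Mathlib

open Filter Topology Set

/-- Clarke generalized directional derivative of `Φ` at `x` in direction `v`. -/
noncomputable def clarkeDeriv {X : Type*} [NormedAddCommGroup X] [NormedSpace ℝ X]
    (Φ : X → ℝ) (x v : X) : ℝ :=
  limsup (fun p : X × ℝ => (Φ (p.1 + p.2 • v) - Φ p.1) / p.2) ((𝓝 x) ×ˢ (𝓝[>] (0:ℝ)))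

/-- Clarke subdifferential of `Φ` at `x`. -/
def clarkeSubdiff {X : Type*} [NormedAddCommGroup X] [NormedSpace ℝ X]
    (Φ : X → ℝ) (x : X) : Set (X →L[ℝ] ℝ) :=
  {f | ∀ v, f v ≤ clarkeDeriv Φ x v}

lemma minsel_aux {D a b d η ε : ℝ} (hε : 0 < ε) (hη : 0 < η) (hη2 : η ≤ 1)
    (hη3 : η * (32*(d+1)) ≤ ε^2) (hd : 0 ≤ d) (ha : 0 ≤ a) (hlow : d - η ≤ a)
    (hb : b ≤ d + η) (hb0 : 0 ≤ b) (hkey : D^2 ≤ 2*b^2 - 2*a^2) :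
    D^2 ≤ (ε/2)^2 := by
  have hb2 : b^2 ≤ (d+η)^2 := by nlinarith
  rcases le_or_gt d η with h | h
  · nlinarith
  · have ha2 : (d-η)^2 ≤ a^2 :=
      mul_self_le_mul_self (by linarith) hlow |>.trans_eq (by ring) |>.trans_eq' (by ring)
    nlinarith

theorem minimal_selection_continuous {M : Type*} [MetricSpace M]
    {N : Type*} [NormedAddCommGroup N] [InnerProductSpace ℝ N] [CompleteSpace N]
    (T : M → Set N)
    (hlsc : ∀ U : Set N, IsOpen U → IsOpen {m : M | (T m ∩ U).Nonempty})
    (husc : ∀ A : Set N, IsClosed A → IsClosed {m : M | (T m ∩ A).Nonempty})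
    (hne : ∀ m, (T m).Nonempty) (hcl : ∀ m, IsClosed (T m))
    (hconv : ∀ m, Convex ℝ (T m)) :
    ∃ s : M → N, Continuous s ∧ ∀ m : M, s m ∈ T m ∧ ∀ y ∈ T m, ‖s m‖ ≤ ‖y‖ := by
  have hmin : ∀ m, ∃ v ∈ T m, ∀ y ∈ T m, ‖v‖ ≤ ‖y‖ := by
    intro m
    obtain ⟨v, hv, hveq⟩ := exists_norm_eq_iInf_of_complete_convex (hne m)
      (hcl m).isComplete (hconv m) (0 : N)
    refine ⟨v, hv, fun y hy => ?_⟩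
    have h2 : (⨅ w : T m, ‖(0:N) - w‖) ≤ ‖(0:N) - y‖ :=
      ciInf_le (f := fun w : T m => ‖(0:N) - w‖) ⟨0, by rintro x ⟨w, rfl⟩; exact norm_nonneg _⟩ ⟨y, hy⟩
    rw [← hveq, zero_sub, zero_sub, norm_neg, norm_neg] at h2
    exact h2
  choose s hs hsmin using hmin
  refine ⟨s, ?_, fun m => ⟨hs m, hsmin m⟩⟩
  rw [continuous_iff_continuousAt]
  intro m₀
  rw [ContinuousAt, Metric.tendsto_nhds]
  intro ε hε
  set d₀ : ℝ := ‖s m₀‖ with hd₀def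
  have hd₀ : 0 ≤ d₀ := norm_nonneg _
  set η : ℝ := min (min (ε/2) 1) (ε^2/(32*(d₀+1))) with hηdef
  have hη : 0 < η := by
    apply lt_min (lt_min (by linarith) one_pos)
    positivity
  have hη1 : η ≤ ε/2 := le_trans (min_le_left _ _) (min_le_left _ _)
  have hη2 : η ≤ 1 := le_trans (min_le_left _ _) (min_le_right _ _)
  have hη3 : η ≤ ε^2/(32*(d₀+1)) := min_le_right _ _
  -- event 1: lsc gives a point of T m near s m₀
  have h1 : ∀ᶠ m in 𝓝 m₀, (T m ∩ Metric.ball (s m₀) η).Nonempty := by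
    have ho := hlsc (Metric.ball (s m₀) η) Metric.isOpen_ball
    exact ho.mem_nhds ⟨s m₀, hs m₀, Metric.mem_ball_self hη⟩
  -- event 2: usc gives lower bound on ‖s m‖
  have h2 : ∀ᶠ m in 𝓝 m₀, d₀ - η ≤ ‖s m‖ := by
    rcases le_or_gt d₀ η with h | h
    · exact Eventually.of_forall fun m => le_trans (by linarith) (norm_nonneg _)
    · have hC := husc (Metric.closedBall 0 (d₀ - η)) Metric.isClosed_closedBall
      have hm₀ : m₀ ∈ {m | (T m ∩ Metric.closedBall 0 (d₀-η)).Nonempty}ᶜ := by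
        rintro ⟨z, hzT, hzB⟩
        have := hsmin m₀ z hzT
        rw [Metric.mem_closedBall, dist_zero_right] at hzB
        linarith
      filter_upwards [hC.isOpen_compl.mem_nhds hm₀] with m hm
      by_contra hcon
      push_neg at hcon
      exact hm ⟨s m, hs m, by rw [Metric.mem_closedBall, dist_zero_right]; linarith⟩
  filter_upwards [h1, h2] with m hy hlow
  obtain ⟨y, hyT, hyB⟩ := hy
  rw [Metric.mem_ball] at hyB
  have hyB' : ‖y - s m₀‖ < η := by rwa [← dist_eq_norm]
  have hy1 : ‖y‖ ≤ d₀ + η := by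
    have h' : ‖(y - s m₀) + s m₀‖ ≤ ‖y - s m₀‖ + ‖s m₀‖ := norm_add_le _ _
    rw [sub_add_cancel] at h'
    linarith
  have hsy : ‖s m‖ ≤ ‖y‖ := hsmin m y hyT
  -- midpoint in T m
  have hmid : (1/2 : ℝ) • s m + (1/2 : ℝ) • y ∈ T m :=
    hconv m (hs m) hyT (by norm_num) (by norm_num) (by norm_num)
  have hmidnorm : ‖s m‖ ≤ ‖(1/2 : ℝ) • s m + (1/2 : ℝ) • y‖ := hsmin m _ hmid
  have hmid2 : ‖(1/2 : ℝ) • s m + (1/2 : ℝ) • y‖ = (1/2) * ‖s m + y‖ := by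
    rw [← smul_add, norm_smul]
    simp
  have hpar : ‖s m + y‖ * ‖s m + y‖ + ‖s m - y‖ * ‖s m - y‖
      = 2 * (‖s m‖ * ‖s m‖ + ‖y‖ * ‖y‖) := by
      have h := parallelogram_law_with_norm ℝ (s m) y; simp only [sq] at h; exact h
  have hkey : ‖s m - y‖^2 ≤ 2*‖y‖^2 - 2*‖s m‖^2 := by
    rw [hmid2] at hmidnorm
    nlinarith [norm_nonneg (s m + y), norm_nonneg (s m)]
  have hsm0 : 0 ≤ ‖s m‖ := norm_nonneg _
  have hη3' : η * (32*(d₀+1)) ≤ ε^2 := by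
    calc η * (32*(d₀+1)) ≤ (ε^2/(32*(d₀+1))) * (32*(d₀+1)) := by
          apply mul_le_mul_of_nonneg_right hη3; positivity
      _ = ε^2 := by field_simp
  have hsq : ‖s m - y‖^2 ≤ (ε/2)^2 :=
    minsel_aux hε hη hη2 hη3' hd₀ hsm0 hlow hy1 (norm_nonneg y) hkey
  have hD : ‖s m - y‖ ≤ ε/2 := by
    nlinarith [norm_nonneg (s m - y)]
  calc dist (s m) (s m₀) = ‖(s m - y) + (y - s m₀)‖ := by rw [dist_eq_norm, sub_add_sub_cancel]
    _ ≤ ‖s m - y‖ + ‖y - s m₀‖ := norm_add_le _ _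
    _ < ε/2 + η := by linarith
    _ ≤ ε := by linarith
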